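/- Let η > 0 and a ≥ 0, and let (v_k)_{k≥1} be a nonnegative sequence. Suppose a nonnegative sequence (d_k)_{k≥2} satisfies d_k ≤ (1/k) ∑_{i=1}^{k-2} H_{i+1} d_{k-i} + a v_k for all k ≥ k₀, where H_i := ∑_{j≥i} h_j with h_j ≥ 0 satisfying k₀ ≥ ∑_{i≥1} e^{ηi} H_{i+1}, and suppose d_j ≤ a ∑_{i=0}^{j-2} e^{-ηi} v_{j-i} for all 2 ≤ j ≤ k₀. Then d_j ≤ a ∑_{i=0}^{j-2} e^{-ηi} v_{j-i} for all j ≥ 2. -/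

import Mathlib

open scoped BigOperators

/-- Discrete Gronwall-type induction: if a nonnegative sequence `d` satisfies
`d_k ≤ (1/k) ∑_{i=1}^{k-2} H_{i+1} d_{k-i} + a v_k` for `k ≥ k₀` with
`H_i = ∑_{j≥i} h_j`, `k₀ ≥ ∑_{i≥1} e^{ηi} H_{i+1}`, and the bound
`d_j ≤ a ∑_{i=0}^{j-2} e^{-ηi} v_{j-i}` holds for `2 ≤ j ≤ k₀`, then it holds
for all `j ≥ 2`. -/
theorem stmt14 (η a : ℝ) (hη : 0 < η) (ha : 0 ≤ a)
    (v d h : ℕ → ℝ) (hv : ∀ k, 0 ≤ v k) (hd : ∀ k, 0 ≤ d k) (hh : ∀ j, 0 ≤ h j)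
    (hhsum : Summable h)
    (H : ℕ → ℝ) (hH : ∀ i, H i = ∑' j : ℕ, if i ≤ j then h j else 0)
    (k₀ : ℕ)
    (hk₀sum : Summable (fun i : ℕ => Real.exp (η * ((i : ℝ) + 1)) * H (i + 2)))
    (hk₀ : (∑' i : ℕ, Real.exp (η * ((i : ℝ) + 1)) * H (i + 2)) ≤ (k₀ : ℝ))
    (hrec : ∀ k, k₀ ≤ k → 2 ≤ k →
      d k ≤ (1 / (k : ℝ)) * ∑ i ∈ Finset.Icc 1 (k - 2), H (i + 1) * d (k - i) + a * v k)
    (hbase : ∀ j, 2 ≤ j → j ≤ k₀ →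
      d j ≤ a * ∑ i ∈ Finset.range (j - 1), Real.exp (-η * (i : ℝ)) * v (j - i)) :
    ∀ j, 2 ≤ j →
      d j ≤ a * ∑ i ∈ Finset.range (j - 1), Real.exp (-η * (i : ℝ)) * v (j - i) := by
  intro j hj
  induction j using Nat.strong_induction_on with
  | _ k ih =>
  by_cases hk : k ≤ k₀
  · exact hbase k hj hk
  push_neg at hk
  have hk0k : k₀ ≤ k := hk.le
  have hkR : (0:ℝ) < (k : ℝ) := by
    have : 0 < k := by omega
    exact_mod_cast this
  have hHnn : ∀ i, 0 ≤ H i := by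
    intro i
    rw [hH]
    refine tsum_nonneg fun j => ?_
    by_cases hij : i ≤ j <;> simp [hij, hh j]
  set S := ∑ n ∈ Finset.Icc 1 (k - 2), Real.exp (-η * (n : ℝ)) * v (k - n) with hS
  have hSnn : 0 ≤ S := Finset.sum_nonneg fun n _ => mul_nonneg (Real.exp_pos _).le (hv _)
  have hIccIco : Finset.Icc 1 (k - 2) = Finset.Ico 1 (k - 1) := by
    rw [← Finset.Ico_add_one_right_eq_Icc]
    congr 1
    omega
  have hBk : a * ∑ i ∈ Finset.range (k - 1), Real.exp (-η * (i : ℝ)) * v (k - i)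
      = a * v k + a * S := by
    have h1 : k - 1 = (k - 2) + 1 := by omega
    rw [h1, Finset.sum_range_succ']
    have h2 : S = ∑ i ∈ Finset.range (k - 2), Real.exp (-η * ((1 + i : ℕ) : ℝ)) * v (k - (1 + i)) := by
      rw [hS, hIccIco, Finset.sum_Ico_eq_sum_range]
      congr 1
    rw [h2]
    have h3 : ∀ x ∈ Finset.range (k - 2),
        Real.exp (-η * ((1 + x : ℕ) : ℝ)) * v (k - (1 + x))
          = Real.exp (-η * ((x : ℝ) + 1)) * v (k - (x + 1)) := by
      intro x _
      have hx : 1 + x = x + 1 := by omega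
      rw [hx]
      norm_cast
    rw [Finset.sum_congr rfl h3]
    simp only [Nat.sub_zero, Real.exp_zero, one_mul, Nat.cast_zero, mul_zero, neg_zero]
    push_cast
    ring
  -- bound each d (k - i)
  have hstep : ∀ i ∈ Finset.Icc 1 (k - 2), d (k - i) ≤ Real.exp (η * (i : ℝ)) * (a * S) := by
    intro i hi
    simp only [Finset.mem_Icc] at hi
    obtain ⟨hi1, hi2⟩ := hi
    have hki : 2 ≤ k - i := by omega
    have hlt : k - i < k := by omega
    have hB := ih (k - i) hlt hki
    refine hB.trans ?_
    have hre : a * ∑ m ∈ Finset.range (k - i - 1), Real.exp (-η * (m : ℝ)) * v (k - i - m)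
        = Real.exp (η * (i : ℝ)) *
          (a * ∑ n ∈ Finset.Ico i (k - 1), Real.exp (-η * (n : ℝ)) * v (k - n)) := by
      rw [Finset.sum_Ico_eq_sum_range]
      have hlen : k - 1 - i = k - i - 1 := by omega
      rw [hlen, Finset.mul_sum, Finset.mul_sum, Finset.mul_sum]
      refine Finset.sum_congr rfl fun m hm => ?_
      have hkim : k - i - m = k - (i + m) := by omega
      rw [hkim]
      push_cast
      have hexp : Real.exp (-η * (m : ℝ)) = Real.exp (η * (i : ℝ)) * Real.exp (-η * ((i : ℝ) + (m : ℝ))) := by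
        rw [← Real.exp_add]
        congr 1
        ring
      rw [hexp]
      ring
    rw [hre]
    have hsub : Finset.Ico i (k - 1) ⊆ Finset.Icc 1 (k - 2) := by
      rw [hIccIco]
      exact Finset.Ico_subset_Ico hi1 le_rfl
    have hsum_le : ∑ n ∈ Finset.Ico i (k - 1), Real.exp (-η * (n : ℝ)) * v (k - n) ≤ S := by
      rw [hS]
      refine Finset.sum_le_sum_of_subset_of_nonneg hsub fun n _ _ => mul_nonneg (Real.exp_pos _).le (hv _)
    exact mul_le_mul_of_nonneg_left (mul_le_mul_of_nonneg_left hsum_le ha) (Real.exp_pos _).le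
  -- main chain
  have hmain := hrec k hk0k hj
  have hsum1 : ∑ i ∈ Finset.Icc 1 (k - 2), H (i + 1) * d (k - i)
      ≤ (∑ i ∈ Finset.Icc 1 (k - 2), Real.exp (η * (i : ℝ)) * H (i + 1)) * (a * S) := by
    rw [Finset.sum_mul]
    refine Finset.sum_le_sum fun i hi => ?_
    have h1 := hstep i hi
    have h2 := hHnn (i + 1)
    nlinarith [hd (k - i), Real.exp_pos (η * (i : ℝ))]
  have hsum2 : ∑ i ∈ Finset.Icc 1 (k - 2), Real.exp (η * (i : ℝ)) * H (i + 1) ≤ (k₀ : ℝ) := by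
    refine le_trans ?_ hk₀
    rw [hIccIco, Finset.sum_Ico_eq_sum_range]
    have hlen : k - 1 - 1 = k - 2 := by omega
    rw [hlen]
    have heq : ∀ m ∈ Finset.range (k - 2),
        Real.exp (η * ((1 + m : ℕ) : ℝ)) * H (1 + m + 1)
          = Real.exp (η * ((m : ℝ) + 1)) * H (m + 2) := by
      intro m _
      have : 1 + m + 1 = m + 2 := by omega
      rw [this]
      push_cast
      ring_nf
    rw [Finset.sum_congr rfl heq]
    refine Summable.sum_le_tsum _ (fun m _ => ?_) hk₀sum
    have := hHnn (m + 2)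
    positivity
  have hfin : (1 / (k : ℝ)) * ∑ i ∈ Finset.Icc 1 (k - 2), H (i + 1) * d (k - i) + a * v k
      ≤ a * v k + a * S := by
    have hk0le : (k₀ : ℝ) ≤ (k : ℝ) := by exact_mod_cast hk0k
    have h3 : ∑ i ∈ Finset.Icc 1 (k - 2), H (i + 1) * d (k - i) ≤ (k : ℝ) * (a * S) := by
      refine hsum1.trans ?_
      have haS : 0 ≤ a * S := by positivity
      nlinarith
    have h4 : (1 / (k : ℝ)) * ∑ i ∈ Finset.Icc 1 (k - 2), H (i + 1) * d (k - i) ≤ a * S := by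
      rw [one_div, inv_mul_le_iff₀ hkR]
      exact h3
    linarith
  rw [hBk]
  exact hmain.trans hfin
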